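/- arXiv:1104.0510 — 9 statements merged into one kernel-verified Lean document; each statement's English description precedes it below -/
import Mathlib

section
/- Let G be a k-chromatic graph and u, v distinct vertices of G. Then {u,v} is an implicit-identity of G if and only if there is no independent set S of G with v ∈ S and u ∉ S such that the chromatic number of G − S is less than k. -/
/-- In a `k`-chromatic graph `G` with `u ≠ v`, `{u,v}` is an
implicit-identity iff there is no independent set `S` with `v ∈ S`, `u ∉ S` and
`χ(G - S) < k`. -/
theorem implicit_identity_iff_no_critical_indep_set {V : Type*} [Fintype V]
    (G : SimpleGraph V) (k : ℕ) (hk : G.chromaticNumber = k)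
    (u v : V) (huv : u ≠ v) :
    (∀ c : G.Coloring (Fin k), c u = c v) ↔
      ¬ ∃ S : Set V, (∀ a ∈ S, ∀ b ∈ S, ¬ G.Adj a b) ∧ v ∈ S ∧ u ∉ S ∧
        (G.induce Sᶜ).chromaticNumber < (k : ℕ∞) := by
  classical
  have hne : Nonempty V := ⟨u⟩
  have hcolG : G.Colorable (Fintype.card V) := G.colorable_of_fintype
  have hkpos : 0 < k := by
    have := G.chromaticNumber_pos hcolG
    rw [hk] at this
    exact_mod_cast this
  constructor
  · rintro hcol ⟨S, hS, hv, hu, hlt⟩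
    -- χ(G - S) ≤ k - 1
    have h1 : (G.induce Sᶜ).chromaticNumber ≤ ((k - 1 : ℕ) : ℕ∞) := by
      have := Order.add_one_le_of_lt hlt
      have hk1 : (k : ℕ∞) = ((k - 1 : ℕ) : ℕ∞) + 1 := by
        exact_mod_cast congrArg (Nat.cast : ℕ → ℕ∞) (by omega : k = (k - 1) + 1)
      rw [hk1] at this
      exact (WithTop.add_le_add_iff_right WithTop.one_ne_top).mp this
    rw [SimpleGraph.chromaticNumber_le_iff_colorable] at h1
    obtain ⟨c'⟩ := h1
    have hlt' : k - 1 < k := by omega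
    let f : V → Fin k := fun w =>
      if h : w ∈ S then ⟨k - 1, hlt'⟩
      else (c' ⟨w, h⟩).castLE (by omega)
    have hvalid : ∀ {a b : V}, G.Adj a b → f a ≠ f b := by
      intro a b hab
      by_cases ha : a ∈ S <;> by_cases hb : b ∈ S
      · exact absurd hab (hS a ha b hb)
      · simp only [f, dif_pos ha, dif_neg hb]
        intro h
        have := (c' ⟨b, hb⟩).2
        have hval := congrArg Fin.val h
        simp [Fin.castLE] at hval
        omega
      · simp only [f, dif_neg ha, dif_pos hb]
        intro h
        have hval := congrArg Fin.val h
        simp [Fin.castLE] at hval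
        omega
      · simp only [f, dif_neg ha, dif_neg hb]
        intro h
        have hadj : (G.induce Sᶜ).Adj ⟨a, ha⟩ ⟨b, hb⟩ := by
          simpa using hab
        exact c'.valid hadj (Fin.castLE_injective _ h)
    have h2 : f u = f v := hcol (SimpleGraph.Coloring.mk f fun hab => hvalid hab)
    simp only [f, dif_pos hv, dif_neg hu] at h2
    have hval := congrArg Fin.val h2
    have := (c' ⟨u, hu⟩).2
    simp [Fin.castLE] at hval
    omega
  · intro hno c
    by_contra hne'
    apply hno
    refine ⟨{w | c w = c v}, ?_, rfl, hne', ?_⟩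
    · intro a ha b hb hab
      exact c.valid hab (ha.trans hb.symm)
    · -- color G - S with colors ≠ c v
      let f : {w : V // w ∈ ({w | c w = c v} : Set V)ᶜ} → {x : Fin k // x ≠ c v} :=
        fun w => ⟨c w.1, w.2⟩
      have hvalid : ∀ {a b}, (G.induce ({w | c w = c v} : Set V)ᶜ).Adj a b → f a ≠ f b := by
        intro a b hab h
        have hadj : G.Adj a.1 b.1 := by simpa using hab
        exact c.valid hadj (by simpa [f, Subtype.ext_iff] using h)
      have hc : (G.induce ({w | c w = c v} : Set V)ᶜ).Colorable
          (Fintype.card {x : Fin k // x ≠ c v}) :=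
        (SimpleGraph.Coloring.mk f fun hab => hvalid hab).colorable
      have hcard : Fintype.card {x : Fin k // x ≠ c v} = k - 1 := by
        rw [Fintype.card_subtype_compl]
        simp
      rw [hcard] at hc
      calc (G.induce ({w | c w = c v} : Set V)ᶜ).chromaticNumber
          ≤ ((k - 1 : ℕ) : ℕ∞) := SimpleGraph.chromaticNumber_le_iff_colorable.mpr hc
        _ < (k : ℕ∞) := by exact_mod_cast Nat.sub_lt hkpos one_pos
end

section
/- Let G be a k-chromatic graph (k ≥ 2) with an implicit-edge {u,v}, and let S be an independent set of G with u ∉ S, v ∉ S and χ(G − S) = k − 1. Then {u,v} is an implicit-edge of G − S, i.e., in every proper (k−1)-coloring of G − S, u and v receive different colors. -/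
/-- If `{u,v}` is an implicit-edge of a `k`-chromatic graph `G` (`k ≥ 2`)
and `S` is a critical independent set avoiding `u` and `v`, then `{u,v}` is an
implicit-edge of `G - S`. -/
theorem implicit_edge_invariant {V : Type*} [Fintype V]
    (G : SimpleGraph V) (k : ℕ) (hk2 : 2 ≤ k) (hk : G.chromaticNumber = k)
    (u v : V) (hie : ∀ c : G.Coloring (Fin k), c u ≠ c v)
    (S : Set V) (hS : ∀ a ∈ S, ∀ b ∈ S, ¬ G.Adj a b)
    (hu : u ∉ S) (hv : v ∉ S)
    (hcrit : (G.induce Sᶜ).chromaticNumber = ((k - 1 : ℕ) : ℕ∞)) :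
    ∀ c : (G.induce Sᶜ).Coloring (Fin (k - 1)), c ⟨u, hu⟩ ≠ c ⟨v, hv⟩ := by
  intro c hcuv
  classical
  have hk1 : k - 1 < k := Nat.sub_lt (by omega) one_pos
  -- extend c to a k-coloring of G
  have f : V → Fin k := fun w =>
    if h : w ∈ S then ⟨k - 1, hk1⟩ else Fin.castLE (Nat.sub_le k 1) (c ⟨w, h⟩)
  set f : V → Fin k := fun w =>
    if h : w ∈ S then ⟨k - 1, hk1⟩ else Fin.castLE (Nat.sub_le k 1) (c ⟨w, h⟩)
    with hf
  have hvalid : ∀ {a b : V}, G.Adj a b → f a ≠ f b := by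
    intro a b hab
    by_cases ha : a ∈ S <;> by_cases hb : b ∈ S
    · exact absurd hab (hS a ha b hb)
    · simp only [hf, dif_pos ha, dif_neg hb]
      intro h
      have := congrArg Fin.val h
      simp at this
      have := (c ⟨b, hb⟩).isLt
      omega
    · simp only [hf, dif_neg ha, dif_pos hb]
      intro h
      have := congrArg Fin.val h
      simp at this
      have := (c ⟨a, ha⟩).isLt
      omega
    · simp only [hf, dif_neg ha, dif_neg hb]
      intro h
      have hne : c ⟨a, ha⟩ ≠ c ⟨b, hb⟩ := c.valid (by exact hab)
      exact hne (Fin.castLE_injective _ h)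
  apply hie (SimpleGraph.Coloring.mk f fun hab => hvalid hab)
  show f u = f v
  simp only [hf, dif_neg hu, dif_neg hv]
  exact congrArg _ hcuv
end

section
/- Let G be a k-chromatic graph (k ≥ 2) with an implicit-identity {u,v}, and let S be an independent set of G with u ∉ S, v ∉ S and χ(G − S) = k − 1. Then {u,v} is an implicit-identity of G − S, i.e., in every proper (k−1)-coloring of G − S, u and v receive the same color. -/
/-- If `{u,v}` is an implicit-identity of a `k`-chromatic graph `G`
(`k ≥ 2`) and `S` is a critical independent set avoiding `u` and `v`, then `{u,v}` is
an implicit-identity of `G - S`. -/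
theorem implicit_identity_invariant {V : Type*} [Fintype V]
    (G : SimpleGraph V) (k : ℕ) (hk2 : 2 ≤ k) (hk : G.chromaticNumber = k)
    (u v : V) (hii : ∀ c : G.Coloring (Fin k), c u = c v)
    (S : Set V) (hS : ∀ a ∈ S, ∀ b ∈ S, ¬ G.Adj a b)
    (hu : u ∉ S) (hv : v ∉ S)
    (hcrit : (G.induce Sᶜ).chromaticNumber = ((k - 1 : ℕ) : ℕ∞)) :
    ∀ c : (G.induce Sᶜ).Coloring (Fin (k - 1)), c ⟨u, hu⟩ = c ⟨v, hv⟩ := by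
  intro c
  have hklt : k - 1 < k := Nat.sub_lt (by omega) one_pos
  classical
  let C : V → Fin k := fun x =>
    if h : x ∈ S then ⟨k - 1, hklt⟩
    else Fin.castLE (Nat.sub_le k 1) (c ⟨x, h⟩)
  have hvalid : ∀ {a b : V}, G.Adj a b → C a ≠ C b := by
    intro a b hab
    by_cases ha : a ∈ S
    · by_cases hb : b ∈ S
      · exact absurd hab (hS a ha b hb)
      · simp only [C, dif_pos ha, dif_neg hb]
        intro h
        have h2 : k - 1 = (c ⟨b, hb⟩ : ℕ) := congrArg Fin.val h
        have := (c ⟨b, hb⟩).isLt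
        omega
    · by_cases hb : b ∈ S
      · simp only [C, dif_neg ha, dif_pos hb]
        intro h
        have := (c ⟨a, ha⟩).isLt
        have h2 : ((c ⟨a, ha⟩ : ℕ)) = k - 1 := by
          simpa using congrArg Fin.val h
        omega
      · simp only [C, dif_neg ha, dif_neg hb]
        intro h
        have hcc : c ⟨a, ha⟩ = c ⟨b, hb⟩ := Fin.castLE_injective _ h
        exact c.valid (by exact hab) hcc
  have hCuv := hii (SimpleGraph.Coloring.mk C fun {a b} hab => hvalid hab)
  have hCuv' : C u = C v := hCuv
  simp only [C, dif_neg hu, dif_neg hv] at hCuv'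
  exact Fin.castLE_injective _ hCuv'
end

section
/- Let G be a k-chromatic graph, {u,v} an implicit-relation (edge or identity), and let S₁, …, Sℓ (0 ≤ ℓ ≤ k−2) be a sequence of sets such that each Sᵢ is a critical independent set avoiding u and v of the graph G − S₁ − ⋯ − S_{i−1}. Then {u,v} has the same implicit-relation in H = G − S₁ − ⋯ − Sℓ, which is (k−ℓ)-chromatic. -/
/-- Removing a sequence of critical independent sets `S 0, …, S (ℓ-1)`
(each avoiding `u` and `v`, and critical for the graph left at that stage) from a
`k`-chromatic graph `G` preserves the implicit-relation (edge or identity) on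
`{u,v}`, and the resulting graph `H` is `(k-ℓ)`-chromatic. -/
theorem implicit_relation_invariant_iterated {V : Type*} [Fintype V]
    (G : SimpleGraph V) (k ℓ : ℕ) (hℓ : ℓ ≤ k - 2) (hk : G.chromaticNumber = k)
    (u v : V) (S : ℕ → Set V)
    (hindep : ∀ i < ℓ, ∀ a ∈ S i, ∀ b ∈ S i, ¬ G.Adj a b)
    (hu : ∀ i < ℓ, u ∉ S i) (hv : ∀ i < ℓ, v ∉ S i)
    (hcrit : ∀ i < ℓ,
      (G.induce {x | ∀ j < i + 1, x ∉ S j}).chromaticNumber = ((k - (i + 1) : ℕ) : ℕ∞)) :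
    (G.induce {x | ∀ j < ℓ, x ∉ S j}).chromaticNumber = ((k - ℓ : ℕ) : ℕ∞) ∧
    ∀ (hu' : u ∈ {x | ∀ j < ℓ, x ∉ S j}) (hv' : v ∈ {x | ∀ j < ℓ, x ∉ S j}),
      ((∀ c : G.Coloring (Fin k), c u ≠ c v) →
        ∀ c : (G.induce {x | ∀ j < ℓ, x ∉ S j}).Coloring (Fin (k - ℓ)),
          c ⟨u, hu'⟩ ≠ c ⟨v, hv'⟩) ∧
      ((∀ c : G.Coloring (Fin k), c u = c v) →
        ∀ c : (G.induce {x | ∀ j < ℓ, x ∉ S j}).Coloring (Fin (k - ℓ)),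
          c ⟨u, hu'⟩ = c ⟨v, hv'⟩) := by
  have hℓk : ℓ ≤ k := le_trans hℓ (Nat.sub_le k 2)
  -- Extension of a (k-ℓ)-coloring of H to a k-coloring of G.
  have key : ∀ (hu' : u ∈ {x | ∀ j < ℓ, x ∉ S j}) (hv' : v ∈ {x | ∀ j < ℓ, x ∉ S j})
      (c : (G.induce {x | ∀ j < ℓ, x ∉ S j}).Coloring (Fin (k - ℓ))),
      ∃ c' : G.Coloring (Fin k),
        c' u = Fin.castLE (Nat.sub_le k ℓ) (c ⟨u, hu'⟩) ∧
        c' v = Fin.castLE (Nat.sub_le k ℓ) (c ⟨v, hv'⟩) := by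
    intro hu' hv' c
    classical
    let f : V → Fin k := fun x =>
      if h : ∃ j, j < ℓ ∧ x ∈ S j then
        ⟨k - ℓ + Nat.find h, by have := (Nat.find_spec h).1; omega⟩
      else
        Fin.castLE (Nat.sub_le k ℓ) (c ⟨x, fun j hj hx => h ⟨j, hj, hx⟩⟩)
    have hvalid : ∀ {a b : V}, G.Adj a b → f a ≠ f b := by
      intro a b hab
      by_cases ha : ∃ j, j < ℓ ∧ a ∈ S j <;> by_cases hb : ∃ j, j < ℓ ∧ b ∈ S j <;>
        simp only [f, dif_pos, dif_neg, ha, hb, dite_true, dite_false]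
      · -- both in some S j
        intro hcontra
        have hja := Nat.find_spec ha
        have hjb := Nat.find_spec hb
        have : Nat.find ha = Nat.find hb := by
          have := Fin.mk.inj_iff.mp hcontra
          omega
        exact hindep (Nat.find ha) hja.1 a hja.2 b (this ▸ hjb.2) hab
      · -- a in S, b not
        intro hcontra
        have hja := (Nat.find_spec ha).1
        have hb' : (c ⟨b, fun j hj hx => hb ⟨j, hj, hx⟩⟩ : Fin (k - ℓ)).val < k - ℓ :=
          (c ⟨b, fun j hj hx => hb ⟨j, hj, hx⟩⟩).isLt
        have := Fin.mk.inj_iff.mp hcontra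
        simp [Fin.castLE] at hcontra
        omega
      · intro hcontra
        have hjb := (Nat.find_spec hb).1
        have ha' : (c ⟨a, fun j hj hx => ha ⟨j, hj, hx⟩⟩ : Fin (k - ℓ)).val < k - ℓ :=
          (c ⟨a, fun j hj hx => ha ⟨j, hj, hx⟩⟩).isLt
        simp [Fin.castLE, Fin.ext_iff] at hcontra
        omega
      · -- both in H
        intro hcontra
        have hadj : (G.induce {x | ∀ j < ℓ, x ∉ S j}).Adj ⟨a, fun j hj hx => ha ⟨j, hj, hx⟩⟩
            ⟨b, fun j hj hx => hb ⟨j, hj, hx⟩⟩ := hab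
        have := c.valid hadj
        exact this (Fin.castLE_injective _ hcontra)
    refine ⟨SimpleGraph.Coloring.mk f (fun h => hvalid h), ?_, ?_⟩
    · show f u = _
      simp only [f]
      rw [dif_neg (by rintro ⟨j, hj, hx⟩; exact hu j hj hx)]
    · show f v = _
      simp only [f]
      rw [dif_neg (by rintro ⟨j, hj, hx⟩; exact hv j hj hx)]
  refine ⟨?_, ?_⟩
  · rcases Nat.eq_zero_or_pos ℓ with h0 | hpos
    · subst h0
      have hset : {x : V | ∀ j < 0, x ∉ S j} = Set.univ := by
        ext x; simp
      rw [hset, Nat.sub_zero]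
      have hiso : (G.induce (Set.univ : Set V)) ≃g G := SimpleGraph.induceUnivIso G
      refine le_antisymm ?_ ?_ |>.trans hk
      · exact SimpleGraph.chromaticNumber_mono_of_hom hiso.toEmbedding.toHom
      · exact SimpleGraph.chromaticNumber_mono_of_hom hiso.symm.toEmbedding.toHom
    · have := hcrit (ℓ - 1) (by omega)
      have h1 : ℓ - 1 + 1 = ℓ := by omega
      rw [h1] at this
      exact this
  · intro hu' hv'
    constructor
    · intro hne c
      obtain ⟨c', hcu, hcv⟩ := key hu' hv' c
      intro h
      exact hne c' (by rw [hcu, hcv, h])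
    · intro heq c
      obtain ⟨c', hcu, hcv⟩ := key hu' hv' c
      have := heq c'
      rw [hcu, hcv] at this
      exact Fin.castLE_injective _ this
end

section
/- Let G be a k-chromatic graph with implicit-edge {u,v} (u,v nonadjacent). Then in every proper k-coloring c of G, the vertices u and v lie in the same connected component of the subgraph of G induced by the vertices colored c(u) or c(v) (i.e., there is a Kempe chain in colors c(u), c(v) containing both u and v). -/
/-- If `{u,v}` is an implicit-edge of a `k`-chromatic graph `G`, then in
every proper `k`-coloring `c` of `G` there is a Kempe chain in the colors
`c u, c v` containing both `u` and `v`: `u` and `v` are connected in the subgraph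
induced on the vertices colored `c u` or `c v`. -/
theorem implicit_edge_kempe_chain {V : Type*} [Fintype V]
    (G : SimpleGraph V) (k : ℕ) (hk : G.chromaticNumber = k)
    (u v : V) (huv : ¬ G.Adj u v)
    (hie : ∀ c : G.Coloring (Fin k), c u ≠ c v) :
    ∀ c : G.Coloring (Fin k),
      (G.induce {x | c x = c u ∨ c x = c v}).Reachable
        ⟨u, Or.inl rfl⟩ ⟨v, Or.inr rfl⟩ := by
  classical
  intro c
  by_contra hreach
  set S : Set V := {x | c x = c u ∨ c x = c v} with hS
  -- P x : x lies in u's Kempe chain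
  let P : V → Prop := fun x => ∃ h : x ∈ S,
    (G.induce S).Reachable ⟨u, Or.inl rfl⟩ ⟨x, h⟩
  have hPu : P u := ⟨Or.inl rfl, SimpleGraph.Reachable.refl _⟩
  have hPv : ¬ P v := by
    rintro ⟨h, hr⟩
    exact hreach hr
  have hPS : ∀ x, P x → x ∈ S := fun x hx => hx.1
  -- chain closure along edges
  have hstep : ∀ x y, P x → G.Adj x y → y ∈ S → P y := by
    rintro x y ⟨hxS, hr⟩ hadj hyS
    refine ⟨hyS, hr.trans ?_⟩
    exact SimpleGraph.Adj.reachable (by exact hadj : (G.induce S).Adj ⟨x, hxS⟩ ⟨y, hyS⟩)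
  -- swapped coloring
  let f : V → Fin k := fun x => if P x then Equiv.swap (c u) (c v) (c x) else c x
  have hvalid : ∀ ⦃a b : V⦄, G.Adj a b → f a ≠ f b := by
    intro a b hab
    have hcab : c a ≠ c b := c.valid hab
    by_cases ha : P a <;> by_cases hb : P b <;> simp only [f, ha, hb, if_pos, if_neg,
      if_true, if_false]
    · exact fun h => hcab (Equiv.injective _ h)
    · -- a in chain, b not: b ∉ S
      have hbS : b ∉ S := fun hbS => hb (hstep a b ha hab hbS)
      have hb1 : c b ≠ c u := fun h => hbS (Or.inl h)
      have hb2 : c b ≠ c v := fun h => hbS (Or.inr h)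
      rcases hPS a ha with h | h <;> rw [h] <;> simp [Equiv.swap_apply_left,
        Equiv.swap_apply_right] <;> [exact fun h => hb2 h.symm; exact fun h => hb1 h.symm]
    · have haS : a ∉ S := fun haS => ha (hstep b a hb hab.symm haS)
      have ha1 : c a ≠ c u := fun h => haS (Or.inl h)
      have ha2 : c a ≠ c v := fun h => haS (Or.inr h)
      rcases hPS b hb with h | h <;> rw [h] <;> simp [Equiv.swap_apply_left,
        Equiv.swap_apply_right] <;> [exact ha2; exact ha1]
    · exact hcab
  let c' : G.Coloring (Fin k) := SimpleGraph.Coloring.mk f (fun {a b} h => hvalid h)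
  apply hie c'
  have h1 : c' u = c v := by
    show f u = c v
    simp only [f]
    rw [if_pos hPu, Equiv.swap_apply_left]
  have h2 : c' v = c v := by
    show f v = c v
    simp only [f]
    rw [if_neg hPv]
  rw [h1, h2]
end

section
/- Let G be a k-chromatic graph and w a critical vertex of G (i.e., χ(G − w) < k). If {u,v} is an implicit-identity of G with w ∉ {u,v}, then w is adjacent to both u and v. -/
/-- Auxiliary lemma: if the deleted graph is `(k-1)`-colorable, `k ≥ 1`, and every
`k`-coloring identifies `u` and `v`, then `w` is adjacent to `u`. -/
lemma aux_adj {V : Type*} (G : SimpleGraph V) (k : ℕ) (hk1 : 1 ≤ k)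
    (w u v : V) (hwu : w ≠ u) (hwv : w ≠ v) (hne : u ≠ v)
    (hcol : (G.induce {x | x ≠ w}).Colorable (k - 1))
    (hii : ∀ c : G.Coloring (Fin k), c u = c v) : G.Adj w u := by
  by_contra hna
  obtain ⟨c'⟩ := hcol
  have hlt : k - 1 < k := Nat.sub_lt hk1 one_pos
  set top : Fin k := ⟨k - 1, hlt⟩ with htop
  have hval : ∀ (x : V) (hx : x ≠ w), ((c' ⟨x, hx⟩).castLE (Nat.sub_le k 1) : Fin k) ≠ top := by
    intro x hx h
    have := congrArg Fin.val h
    simp only [Fin.coe_castLE, htop] at this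
    exact absurd this (Nat.ne_of_lt (c' ⟨x, hx⟩).isLt)
  classical
  let f : V → Fin k := fun x =>
    if hx : x = w ∨ x = u then top else (c' ⟨x, fun h => hx (Or.inl h)⟩).castLE (Nat.sub_le k 1)
  have hvalid : ∀ {a b : V}, G.Adj a b → f a ≠ f b := by
    intro a b hab
    by_cases ha : a = w ∨ a = u <;> by_cases hb : b = w ∨ b = u
    · exfalso
      rcases ha with ha | ha <;> rcases hb with hb | hb <;> subst ha <;> subst hb
      · exact G.loopless.irrefl _ hab
      · exact hna hab
      · exact hna hab.symm
      · exact G.loopless.irrefl _ hab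
    · simp only [f, dif_pos ha, dif_neg hb]
      exact fun h => hval b (fun h' => hb (Or.inl h')) h.symm
    · simp only [f, dif_neg ha, dif_pos hb]
      exact hval a (fun h' => ha (Or.inl h')) 
    · simp only [f, dif_neg ha, dif_neg hb]
      intro h
      have hadj : (G.induce {x | x ≠ w}).Adj ⟨a, fun h' => ha (Or.inl h')⟩
          ⟨b, fun h' => hb (Or.inl h')⟩ := hab
      exact c'.valid hadj (Fin.castLE_injective _ h)
  let c : G.Coloring (Fin k) := SimpleGraph.Coloring.mk f hvalid
  have hcu : c u = top := dif_pos (Or.inr rfl)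
  have hvnot : ¬(v = w ∨ v = u) := by
    rintro (h | h)
    exacts [hwv h.symm, hne h.symm]
  have hcv' : c v = (c' ⟨v, fun h => hvnot (Or.inl h)⟩).castLE (Nat.sub_le k 1) :=
    dif_neg hvnot
  have hcv : c v ≠ top := hcv' ▸ hval v _
  exact hcv (hii c ▸ hcu)

/-- If `w` is a critical vertex of a `k`-chromatic graph `G` and
`{u,v}` is an implicit-identity of `G` with `w ∉ {u,v}`, then `w` is adjacent to
both `u` and `v`. -/
theorem critical_vertex_adj_implicit_identity {V : Type*} [Fintype V]
    (G : SimpleGraph V) (k : ℕ) (hk : G.chromaticNumber = k)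
    (w : V) (hw : (G.induce {x | x ≠ w}).chromaticNumber < (k : ℕ∞))
    (u v : V) (hne : u ≠ v) (hwu : w ≠ u) (hwv : w ≠ v)
    (hii : ∀ c : G.Coloring (Fin k), c u = c v) :
    G.Adj w u ∧ G.Adj w v := by
  have hk1 : 1 ≤ k := by
    by_contra h
    push_neg at h
    interval_cases k
    simp at hw
  have hle : (G.induce {x | x ≠ w}).chromaticNumber ≤ ((k - 1 : ℕ) : ℕ∞) := by
    have : ((k : ℕ∞)) = ((k - 1 : ℕ) : ℕ∞) + 1 := by
      norm_cast
      omega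
    rw [this] at hw
    exact Order.le_of_lt_add_one hw
  have hcol : (G.induce {x | x ≠ w}).Colorable (k - 1) :=
    SimpleGraph.chromaticNumber_le_iff_colorable.mp hle
  exact ⟨aux_adj G k hk1 w u v hwu hwv hne hcol hii,
    aux_adj G k hk1 w v u hwv hwu hne.symm hcol (fun c => (hii c).symm)⟩
end

section
/- Let G be a k-chromatic graph and w a critical vertex of G. If {u,v} is an implicit-edge of G with w ∉ {u,v}, then w is adjacent to at least one of u and v. -/
/-- If `w` is a critical vertex of a `k`-chromatic graph `G` and
`{u,v}` is an implicit-edge of `G` with `w ∉ {u,v}`, then `w` is adjacent to at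
least one of `u` and `v`. -/
theorem critical_vertex_adj_implicit_edge {V : Type*} [Fintype V]
    (G : SimpleGraph V) (k : ℕ) (hk : G.chromaticNumber = k)
    (w : V) (hw : (G.induce {x | x ≠ w}).chromaticNumber < (k : ℕ∞))
    (u v : V) (huv : ¬ G.Adj u v) (hne : u ≠ v) (hwu : w ≠ u) (hwv : w ≠ v)
    (hie : ∀ c : G.Coloring (Fin k), c u ≠ c v) :
    G.Adj w u ∨ G.Adj w v := by
  classical
  by_contra hcon
  push_neg at hcon
  obtain ⟨hau, hav⟩ := hcon
  -- k ≥ 1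
  have hk1 : 1 ≤ k := by
    by_contra h
    push_neg at h
    interval_cases k
    simp at hw
  -- obtain a (k-1)-coloring of G - w
  have hle : (G.induce {x | x ≠ w}).chromaticNumber ≤ ((k - 1 : ℕ) : ℕ∞) := by
    have : ((k - 1 : ℕ) : ℕ∞) + 1 = (k : ℕ∞) := by
      calc ((k - 1 : ℕ) : ℕ∞) + 1 = ((k - 1 + 1 : ℕ) : ℕ∞) := by norm_cast
        _ = (k : ℕ∞) := by rw [Nat.sub_add_cancel hk1]
    rw [← this] at hw
    exact Order.le_of_lt_add_one hw
  rw [SimpleGraph.chromaticNumber_le_iff_colorable] at hle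
  obtain ⟨c⟩ := hle
  -- build a k-coloring of G where u, v, w all get color k-1
  have hklt : k - 1 < k := by omega
  set top : Fin k := ⟨k - 1, hklt⟩ with htop
  have hcast : ∀ x : {x | x ≠ w}, (Fin.castLE (by omega : k - 1 ≤ k) (c x)) ≠ top := by
    intro x h
    have h2 := (c x).2
    have h3 : (Fin.castLE (by omega : k - 1 ≤ k) (c x)).val = (c x).val :=
      Fin.coe_castLE _ _
    rw [h] at h3
    simp only [htop] at h3
    omega
  let f : V → Fin k := fun x =>
    if hx : x = u ∨ x = v ∨ x = w then top
    else Fin.castLE (by omega) (c ⟨x, by rintro rfl; exact hx (Or.inr (Or.inr rfl))⟩)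
  have hvalid : ∀ {a b : V}, G.Adj a b → f a ≠ f b := by
    intro a b hab
    by_cases ha : a = u ∨ a = v ∨ a = w <;> by_cases hb : b = u ∨ b = v ∨ b = w
    · exfalso
      rcases ha with rfl | rfl | rfl <;> rcases hb with rfl | rfl | rfl <;>
        first
          | exact G.irrefl hab
          | exact huv hab
          | exact huv hab.symm
          | exact hau hab
          | exact hau hab.symm
          | exact hav hab
          | exact hav hab.symm
    · simp only [f, dif_pos ha, dif_neg hb]
      exact fun h => hcast _ h.symm
    · simp only [f, dif_neg ha, dif_pos hb]
      exact hcast _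
    · simp only [f, dif_neg ha, dif_neg hb]
      intro h
      have hab' : (G.induce {x | x ≠ w}).Adj
          ⟨a, by rintro rfl; exact ha (Or.inr (Or.inr rfl))⟩
          ⟨b, by rintro rfl; exact hb (Or.inr (Or.inr rfl))⟩ := hab
      exact c.valid hab' (Fin.castLE_injective _ h)
  let hc : G.Coloring (Fin k) := SimpleGraph.Coloring.mk f fun hab => hvalid hab
  exact hie hc (show f u = f v by simp [f])
end

section
/- Let G be a k-chromatic double-critical graph. Then for every edge uv of G, the vertices u and v have at least k − 2 common neighbors, i.e., |N(u) ∩ N(v)| ≥ k − 2. -/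
/-- In a `k`-chromatic double-critical graph `G`, the endpoints of any
edge have at least `k - 2` common neighbors. -/
theorem double_critical_common_neighbors {V : Type*} [Fintype V]
    (G : SimpleGraph V) (k : ℕ) (hconn : G.Connected)
    (hk : G.chromaticNumber = k)
    (hdc : ∀ u v : V, G.Adj u v →
      (G.induce {x | x ≠ u ∧ x ≠ v}).chromaticNumber = ((k - 2 : ℕ) : ℕ∞)) :
    ∀ u v : V, G.Adj u v → k - 2 ≤ (G.neighborSet u ∩ G.neighborSet v).ncard := by
  classical
  intro u v huv
  rcases le_or_gt k 2 with hk2 | hk2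
  · simp [Nat.sub_eq_zero_of_le hk2]
  by_contra hcon
  push_neg at hcon
  -- get a (k-2)-coloring of G - u - v
  have hcol : (G.induce {x | x ≠ u ∧ x ≠ v}).Colorable (k - 2) := by
    rw [← SimpleGraph.chromaticNumber_le_iff_colorable, hdc u v huv]
  obtain ⟨C⟩ := hcol
  set S : Set V := G.neighborSet u ∩ G.neighborSet v with hS
  have hwne : ∀ w ∈ S, w ≠ u ∧ w ≠ v := by
    rintro w ⟨h1, h2⟩
    exact ⟨fun h => G.irrefl (h ▸ h1), fun h => G.irrefl (h ▸ h2)⟩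
  have hpos : 0 < k - 2 := by omega
  -- total function giving colors
  let g : V → Fin (k - 2) := fun x =>
    if h : x ≠ u ∧ x ≠ v then C ⟨x, h⟩ else ⟨0, hpos⟩
  -- there is a color not used on S
  have hcard : (S.toFinset.image g).card < k - 2 := by
    calc (S.toFinset.image g).card ≤ S.toFinset.card := Finset.card_image_le
    _ = S.ncard := (Set.ncard_eq_toFinset_card' S).symm
    _ < k - 2 := hcon
  have : S.toFinset.image g ⊂ Finset.univ := by
    refine Finset.ssubset_univ_iff.mpr ?_
    intro h
    rw [h, Finset.card_univ, Fintype.card_fin] at hcard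
    omega
  obtain ⟨i, -, hi⟩ := Finset.exists_of_ssubset this
  -- define a (k-1)-coloring of G
  have hle : k - 2 ≤ k - 1 := by omega
  have hlt : k - 2 < k - 1 := by omega
  let c : V → Fin (k - 1) := fun x =>
    if x = u then (Fin.castLE hle i)
    else if h : x ≠ u ∧ x ≠ v then
      (if G.Adj u x ∧ C ⟨x, h⟩ = i then ⟨k - 2, hlt⟩ else Fin.castLE hle (C ⟨x, h⟩))
    else ⟨k - 2, hlt⟩
  have hcv : c v = ⟨k - 2, hlt⟩ := by
    simp only [c]
    rw [if_neg huv.ne', dif_neg (by simp)]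
  have hcu : c u = Fin.castLE hle i := by simp [c]
  have castne : ∀ j : Fin (k - 2), Fin.castLE hle j ≠ ⟨k - 2, hlt⟩ := by
    intro j h
    have h1 := j.isLt
    have h2 : (j : ℕ) = k - 2 := by simpa using congrArg Fin.val h
    omega
  have hSnoti : ∀ w (hw : w ∈ S), C ⟨w, hwne w hw⟩ ≠ i := by
    intro w hw h
    apply hi
    refine Finset.mem_image.mpr ⟨w, Set.mem_toFinset.mpr hw, ?_⟩
    simp only [g, dif_pos (hwne w hw)]
    exact h
  have hproper : ∀ x y, G.Adj x y → c x ≠ c y := by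
    have key : ∀ y, G.Adj u y → c u ≠ c y := by
      intro y hxy
      rw [hcu]
      by_cases hyv : y = v
      · subst hyv; rw [hcv]; exact castne i
      · have hy : y ≠ u ∧ y ≠ v := ⟨hxy.ne', hyv⟩
        simp only [c, if_neg hy.1, dif_pos hy]
        split
        · rename_i h
          exact fun he => (castne i he)
        · rename_i h
          intro he
          have : C ⟨y, hy⟩ = i := (Fin.castLE_inj.mp he.symm)
          exact h ⟨hxy, this⟩
    intro x y hxy
    by_cases hxu : x = u
    · subst hxu; exact key y hxy
    by_cases hyu : y = u
    · subst hyu; exact fun h => key x hxy.symm h.symm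
    -- neither is u
    have keyv : ∀ y, G.Adj v y → y ≠ u → c v ≠ c y := by
      intro y hxy hyu
      have hy : y ≠ u ∧ y ≠ v := ⟨hyu, hxy.ne'⟩
      rw [hcv]
      simp only [c, if_neg hyu, dif_pos hy]
      split
      · rename_i h
        have hwS : y ∈ S := ⟨h.1, by simpa [SimpleGraph.mem_neighborSet] using hxy⟩
        exact absurd h.2 (hSnoti y hwS)
      · exact fun he => castne _ he.symm
    by_cases hxv : x = v
    · subst hxv; exact keyv y hxy hyu
    by_cases hyv : y = v
    · subst hyv; exact fun h => keyv x hxy.symm hxu h.symm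
    · have hx : x ≠ u ∧ x ≠ v := ⟨hxu, hxv⟩
      have hy : y ≠ u ∧ y ≠ v := ⟨hyu, hyv⟩
      have hCxy : C ⟨x, hx⟩ ≠ C ⟨y, hy⟩ := C.valid (by exact hxy)
      simp only [c, if_neg hxu, if_neg hyu, dif_pos hx, dif_pos hy]
      split <;> split
      · rename_i h1 h2
        exact absurd (h1.2.trans h2.2.symm) (fun hc => hCxy hc)
      · rename_i h1 h2
        exact fun he => castne _ he.symm
      · rename_i h1 h2
        exact castne _
      · intro he
        exact hCxy (Fin.castLE_inj.mp he)
  have hcolG : G.Colorable (k - 1) := ⟨SimpleGraph.Coloring.mk c fun {x y} h => hproper x y h⟩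
  have := hcolG.chromaticNumber_le
  rw [hk, Nat.cast_le] at this
  omega
end

section
/- There exists a 5-chromatic planar graph if and only if there exists a 4-chromatic planar graph G with nonadjacent vertices u,v forming an implicit-edge such that the graph obtained by identifying u and v is planar. -/
/-- `G` has an `H`-minor: there is a family of nonempty, connected, pairwise
disjoint branch sets in `G`, one for each vertex of `H`, with an edge of `G`
between the branch sets of any two adjacent vertices of `H`. -/
def SimpleGraph.HasMinor {V W : Type*} (G : SimpleGraph V) (H : SimpleGraph W) : Prop :=
  ∃ B : W → Set V,
    (∀ w, (B w).Nonempty) ∧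
    (∀ w, (G.induce (B w)).Connected) ∧
    (Pairwise fun w₁ w₂ => Disjoint (B w₁) (B w₂)) ∧
    (∀ w₁ w₂, H.Adj w₁ w₂ → ∃ a ∈ B w₁, ∃ b ∈ B w₂, G.Adj a b)

/-- Planarity, via Wagner's characterization: no `K₅` minor and no `K₃,₃` minor. -/
def SimpleGraph.Planar {V : Type*} (G : SimpleGraph V) : Prop :=
  ¬ G.HasMinor (⊤ : SimpleGraph (Fin 5)) ∧
  ¬ G.HasMinor (completeBipartiteGraph (Fin 3) (Fin 3))

/-- Vertex identification `G/u,v`: the vertices `u` and `v` are replaced by a single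
vertex (represented by `v`) adjacent to `N(u) ∪ N(v)`. -/
def SimpleGraph.identify {V : Type*} (G : SimpleGraph V) (u v : V) :
    SimpleGraph {x : V // x ≠ u} where
  Adj a b := a ≠ b ∧
    (G.Adj a b ∨ ((a : V) = v ∧ G.Adj u b) ∨ ((b : V) = v ∧ G.Adj u a))
  symm := by
    constructor
    rintro a b ⟨hab, h | ⟨ha, hb⟩ | ⟨hb, ha⟩⟩
    · exact ⟨hab.symm, Or.inl h.symm⟩
    · exact ⟨hab.symm, Or.inr (Or.inr ⟨ha, hb⟩)⟩
    · exact ⟨hab.symm, Or.inr (Or.inl ⟨hb, ha⟩)⟩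
  loopless := by constructor; rintro a ⟨h, -⟩; exact h rfl

open SimpleGraph

section Helpers

/-- Transfer connectivity along a surjection that maps edges to edges or to equal
vertices. -/
lemma connected_transfer {α β : Type*} {A : SimpleGraph α} {B : SimpleGraph β}
    (g : α → β) (hsurj : Function.Surjective g)
    (h : ∀ u v : α, A.Adj u v → B.Adj (g u) (g v) ∨ g u = g v)
    (hA : A.Connected) : B.Connected := by
  have key : ∀ u v : α, A.Reachable u v → B.Reachable (g u) (g v) := by
    intro u v huv
    obtain ⟨w⟩ := huv
    induction w with
    | nil => exact Reachable.refl _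
    | @cons a b c hadj p ih =>
      rcases h a b hadj with h' | h'
      · exact h'.reachable.trans ih
      · exact h' ▸ ih
  haveI hne : Nonempty β := Nonempty.map g hA.nonempty
  refine ⟨fun x y => ?_⟩
  obtain ⟨u, rfl⟩ := hsurj x
  obtain ⟨v, rfl⟩ := hsurj y
  exact key u v (hA.preconnected u v)

lemma hasMinor_mono {V W : Type*} {G G' : SimpleGraph V} {K : SimpleGraph W}
    (hle : G ≤ G') (h : G.HasMinor K) : G'.HasMinor K := by
  obtain ⟨B, h1, h2, h3, h4⟩ := h
  refine ⟨B, h1, fun w => (h2 w).mono ?_, h3, fun w₁ w₂ hadj => ?_⟩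
  · intro a b hab
    exact hle hab
  · obtain ⟨a, ha, b, hb, hab⟩ := h4 w₁ w₂ hadj
    exact ⟨a, ha, b, hb, hle hab⟩

lemma hasMinor_of_iso {α β W : Type*} {G : SimpleGraph α} {G' : SimpleGraph β}
    {K : SimpleGraph W} (e : G ≃g G') (h : G.HasMinor K) : G'.HasMinor K := by
  obtain ⟨B, h1, h2, h3, h4⟩ := h
  refine ⟨fun w => e '' B w, fun w => (h1 w).image e, fun w => ?_,
    fun w₁ w₂ hne => (Set.disjoint_image_iff e.injective).2 (h3 hne),
    fun w₁ w₂ hadj => ?_⟩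
  · refine connected_transfer (fun a => ⟨e a.1, Set.mem_image_of_mem e a.2⟩) ?_ ?_ (h2 w)
    · rintro ⟨b, hb⟩
      obtain ⟨a, ha, rfl⟩ := hb
      exact ⟨⟨a, ha⟩, rfl⟩
    · intro u v huv
      left
      exact e.map_rel_iff.2 huv
  · obtain ⟨a, ha, b, hb, hab⟩ := h4 w₁ w₂ hadj
    exact ⟨e a, Set.mem_image_of_mem e ha, e b, Set.mem_image_of_mem e hb, e.map_rel_iff.2 hab⟩

/-- `G₀` together with a new pendant vertex (`none`) attached to `x`. -/
def pendant {V : Type*} (G₀ : SimpleGraph V) (x : V) : SimpleGraph (Option V) where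
  Adj a b := (∃ a' b', a = some a' ∧ b = some b' ∧ G₀.Adj a' b') ∨
    (a = none ∧ b = some x) ∨ (a = some x ∧ b = none)
  symm := by
    constructor
    rintro a b (⟨a', b', rfl, rfl, h⟩ | ⟨rfl, rfl⟩ | ⟨rfl, rfl⟩)
    · exact Or.inl ⟨b', a', rfl, rfl, h.symm⟩
    · exact Or.inr (Or.inr ⟨rfl, rfl⟩)
    · exact Or.inr (Or.inl ⟨rfl, rfl⟩)
  loopless := by
    constructor
    rintro a (⟨a', b', rfl, h, h'⟩ | ⟨rfl, h⟩ | ⟨rfl, h⟩)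
    · rw [Option.some_inj] at h; exact G₀.irrefl (h ▸ h')
    · exact nomatch h
    · exact nomatch h

@[simp] lemma pendant_adj_some_some {V : Type*} {G₀ : SimpleGraph V} {x a b : V} :
    (pendant G₀ x).Adj (some a) (some b) ↔ G₀.Adj a b := by
  constructor
  · rintro (⟨a', b', ha, hb, h⟩ | ⟨h, -⟩ | ⟨-, h⟩)
    · rw [Option.some_inj] at ha hb; exact ha ▸ hb ▸ h
    · exact nomatch h
    · exact nomatch h
  · exact fun h => Or.inl ⟨a, b, rfl, rfl, h⟩

@[simp] lemma pendant_adj_none {V : Type*} {G₀ : SimpleGraph V} {x : V} {b : Option V} :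
    (pendant G₀ x).Adj none b ↔ b = some x := by
  constructor
  · rintro (⟨a', b', h, -, -⟩ | ⟨-, h⟩ | ⟨h, -⟩)
    · exact nomatch h
    · exact h
    · exact nomatch h
  · rintro rfl; exact Or.inr (Or.inl ⟨rfl, rfl⟩)

@[simp] lemma pendant_adj_none' {V : Type*} {G₀ : SimpleGraph V} {x : V} {b : Option V} :
    (pendant G₀ x).Adj b none ↔ b = some x := by
  rw [SimpleGraph.adj_comm]; exact pendant_adj_none

/-- Adding a pendant vertex does not create a `K`-minor, provided every vertex of `K`
has at least two neighbours. -/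
lemma pendant_hasMinor {V W : Type*} {G₀ : SimpleGraph V} {x : V} {K : SimpleGraph W}
    (hK : ∀ w : W, ∃ w₁ w₂, w₁ ≠ w₂ ∧ K.Adj w w₁ ∧ K.Adj w w₂)
    (h : (pendant G₀ x).HasMinor K) : G₀.HasMinor K := by
  obtain ⟨B, h1, h2, h3, h4⟩ := h
  have hnone : ∀ w, none ∈ B w → some x ∈ B w := by
    intro w hw
    by_cases hsing : ∃ z ∈ B w, z ≠ none
    · obtain ⟨z, hz, hzne⟩ := hsing
      obtain ⟨p⟩ := (h2 w).preconnected ⟨none, hw⟩ ⟨z, hz⟩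
      have hnil : ¬ p.Nil := SimpleGraph.Walk.not_nil_of_ne (by
        intro hh
        exact hzne (congrArg Subtype.val hh).symm)
      obtain ⟨u', hadj, q, -⟩ := SimpleGraph.Walk.not_nil_iff.mp hnil
      have h' : (pendant G₀ x).Adj none u'.1 := hadj
      rw [pendant_adj_none] at h'
      exact h' ▸ u'.2
    · push_neg at hsing
      obtain ⟨w₁, w₂, hne, ha1, ha2⟩ := hK w
      obtain ⟨a, ha, b, hb, hab⟩ := h4 w w₁ ha1
      obtain ⟨a', ha', b', hb', hab'⟩ := h4 w w₂ ha2
      rw [hsing a ha] at hab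
      rw [hsing a' ha'] at hab'
      rw [pendant_adj_none] at hab hab'
      subst hab; subst hab'
      exact (Set.disjoint_left.mp (h3 hne) hb hb').elim
  refine ⟨fun w => {a | some a ∈ B w}, ?_, ?_, ?_, ?_⟩
  · intro w
    obtain ⟨z, hz⟩ := h1 w
    cases z with
    | none => exact ⟨x, hnone w hz⟩
    | some a => exact ⟨a, hz⟩
  · intro w
    refine connected_transfer
      (A := (pendant G₀ x).induce (B w)) (B := G₀.induce {a | some a ∈ B w})
      (fun z => ⟨z.1.elim x id, by
        rcases z with ⟨(_ | a), hz⟩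
        · simpa using hnone w hz
        · simpa using hz⟩) ?_ ?_ (h2 w)
    · rintro ⟨a, ha⟩
      exact ⟨⟨some a, ha⟩, rfl⟩
    · rintro ⟨(_ | a), hu⟩ ⟨(_ | b), hv⟩ huv
      · exact absurd (huv : (pendant G₀ x).Adj none none) (by simp)
      · have h' : (pendant G₀ x).Adj none (some b) := huv
        rw [pendant_adj_none, Option.some_inj] at h'
        exact Or.inr (Subtype.ext (by simp [h']))
      · have h' : (pendant G₀ x).Adj (some a) none := huv
        rw [pendant_adj_none', Option.some_inj] at h'
        exact Or.inr (Subtype.ext (by simp [h']))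
      · have h' : (pendant G₀ x).Adj (some a) (some b) := huv
        rw [pendant_adj_some_some] at h'
        exact Or.inl h'
  · intro w₁ w₂ hne
    rw [Set.disjoint_left]
    intro a ha ha'
    exact Set.disjoint_left.mp (h3 hne) ha ha'
  · intro w₁ w₂ hadj
    obtain ⟨a, ha, b, hb, hab⟩ := h4 w₁ w₂ hadj
    have hWne : w₁ ≠ w₂ := hadj.ne
    cases a with
    | none =>
      rw [pendant_adj_none] at hab
      subst hab
      exact (Set.disjoint_left.mp (h3 hWne) (hnone w₁ ha) hb).elim
    | some a' =>
      cases b with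
      | none =>
        rw [pendant_adj_none', Option.some_inj] at hab
        subst hab
        exact (Set.disjoint_left.mp (h3 hWne) ha (hnone w₂ hb)).elim
      | some b' =>
        rw [pendant_adj_some_some] at hab
        exact ⟨a', ha, b', hb, hab⟩

lemma chromaticNumber_eq_succ' {V : Type*} {G : SimpleGraph V} {m : ℕ}
    (h1 : G.Colorable (m + 1)) (h2 : ¬ G.Colorable m) :
    G.chromaticNumber = ((m + 1 : ℕ) : ℕ∞) := by
  refine le_antisymm (by exact_mod_cast h1.chromaticNumber_le) ?_
  by_contra hlt
  push_neg at hlt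
  rw [show ((m + 1 : ℕ) : ℕ∞) = (m : ℕ∞) + 1 by push_cast; ring] at hlt
  rw [ENat.lt_add_one_iff (by simp)] at hlt
  exact h2 (chromaticNumber_le_iff_colorable.mp hlt)

lemma not_colorable_of_chromaticNumber {V : Type*} {G : SimpleGraph V} {m k : ℕ}
    (h : G.chromaticNumber = (m : ℕ∞)) (hk : k < m) : ¬ G.Colorable k := by
  intro hc
  have := hc.chromaticNumber_le
  rw [h] at this
  exact absurd (by exact_mod_cast this) (Nat.not_le.mpr hk)

end Helpers

/-- There exists a 5-chromatic planar graph iff there exists a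
4-chromatic planar graph `G` with nonadjacent vertices `u, v` forming an
implicit-edge such that the graph obtained by identifying `u` and `v` is planar. -/
theorem five_chromatic_planar_iff_implicit_edge :
    (∃ (V : Type) (_ : Fintype V) (G : SimpleGraph V),
        G.Planar ∧ G.chromaticNumber = 5) ↔
    (∃ (V : Type) (_ : Fintype V) (G : SimpleGraph V) (u v : V),
        G.Planar ∧ G.chromaticNumber = 4 ∧ u ≠ v ∧ ¬ G.Adj u v ∧
        (∀ c : G.Coloring (Fin 4), c u ≠ c v) ∧
        (G.identify u v).Planar) := by
  constructor
  · -- Forward direction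
    rintro ⟨V, _, H, hpl, h5⟩
    classical
    have hH4 : ¬ H.Colorable 4 :=
      not_colorable_of_chromaticNumber (by exact_mod_cast h5) (by norm_num)
    haveI : Finite (SimpleGraph V) :=
      Finite.of_injective (fun G : SimpleGraph V => G.Adj) (fun a b h => SimpleGraph.ext h)
    obtain ⟨G', hG'S, hmin⟩ := (wellFounded_lt (α := SimpleGraph V)).has_min
      {G' : SimpleGraph V | G' ≤ H ∧ ¬ G'.Colorable 4} ⟨H, le_refl H, hH4⟩
    obtain ⟨hG'le, hG'4⟩ := hG'S
    have hedge : ∃ x y : V, G'.Adj x y := by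
      by_contra hno
      push_neg at hno
      exact hG'4 ⟨SimpleGraph.Coloring.mk (fun _ => (0 : Fin 4))
        (fun {a b} hab => absurd hab (hno a b))⟩
    obtain ⟨x, y, hxy⟩ := hedge
    have hxny : x ≠ y := hxy.ne
    set G₀ : SimpleGraph V := G'.deleteEdges {s(x, y)} with hG₀def
    have hG₀le : G₀ ≤ G' := SimpleGraph.deleteEdges_le _
    have hG₀nadj : ¬ G₀.Adj x y := by simp [hG₀def]
    have hG₀lt : G₀ < G' := lt_of_le_of_ne hG₀le (fun h => hG₀nadj (by rw [h]; exact hxy))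
    have hG₀4 : G₀.Colorable 4 := by
      by_contra h4
      exact hmin G₀ ⟨hG₀le.trans hG'le, h4⟩ hG₀lt
    have hkey : ∀ c : G₀.Coloring (Fin 4), c x = c y := by
      intro c
      by_contra hne
      refine hG'4 ⟨SimpleGraph.Coloring.mk (fun a => c a) ?_⟩
      intro a b hab
      by_cases hmem : s(a, b) = s(x, y)
      · rcases Sym2.eq_iff.mp hmem with ⟨rfl, rfl⟩ | ⟨rfl, rfl⟩
        · exact hne
        · exact fun hcc => hne hcc.symm
      · exact c.valid ((SimpleGraph.deleteEdges_adj).mpr ⟨hab, by simpa using hmem⟩)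
    -- the gadget graph: `G₀` plus a pendant vertex at `x`
    set P : SimpleGraph (Option V) := pendant G₀ x with hPdef
    have hK5 : ∀ w : Fin 5, ∃ w₁ w₂, w₁ ≠ w₂ ∧
        (⊤ : SimpleGraph (Fin 5)).Adj w w₁ ∧ (⊤ : SimpleGraph (Fin 5)).Adj w w₂ := by
      decide
    have hK33 : ∀ w : Fin 3 ⊕ Fin 3, ∃ w₁ w₂, w₁ ≠ w₂ ∧
        (completeBipartiteGraph (Fin 3) (Fin 3)).Adj w w₁ ∧
        (completeBipartiteGraph (Fin 3) (Fin 3)).Adj w w₂ := by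
      rintro (i | j)
      · exact ⟨Sum.inr 0, Sum.inr 1, by decide, Or.inl ⟨rfl, rfl⟩, Or.inl ⟨rfl, rfl⟩⟩
      · exact ⟨Sum.inl 0, Sum.inl 1, by decide, Or.inr ⟨rfl, rfl⟩, Or.inr ⟨rfl, rfl⟩⟩
    have hPpl : P.Planar :=
      ⟨fun hm => hpl.1 (hasMinor_mono (hG₀le.trans hG'le) (pendant_hasMinor hK5 hm)),
       fun hm => hpl.2 (hasMinor_mono (hG₀le.trans hG'le) (pendant_hasMinor hK33 hm))⟩
    obtain ⟨c₀⟩ := hG₀4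
    obtain ⟨z, hz⟩ := exists_ne (c₀ x)
    have hP4 : P.Colorable 4 := by
      refine ⟨SimpleGraph.Coloring.mk (fun o => o.elim z (fun a => c₀ a)) ?_⟩
      intro o₁ o₂ hab
      match o₁, o₂ with
      | none, none => exact absurd hab (by simp)
      | none, some b =>
        rw [show P = pendant G₀ x from hPdef, pendant_adj_none, Option.some_inj] at hab
        subst hab
        simpa using hz
      | some a, none =>
        rw [show P = pendant G₀ x from hPdef, pendant_adj_none', Option.some_inj] at hab
        subst hab
        simpa using hz.symm
      | some a, some b =>
        rw [show P = pendant G₀ x from hPdef, pendant_adj_some_some] at hab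
        simpa using c₀.valid hab
    have hP3 : ¬ P.Colorable 3 := by
      rintro ⟨c⟩
      have c₀' : G₀.Coloring (Fin 3) :=
        SimpleGraph.Coloring.mk (fun a => c (some a))
          (fun {a b} hab => c.valid (pendant_adj_some_some.mpr hab))
      refine hG'4 ⟨SimpleGraph.Coloring.mk
        (fun a => if a = x then Fin.last 3 else (c₀' a).castSucc) ?_⟩
      intro a b hab
      by_cases ha : a = x <;> by_cases hb : b = x
      · exact absurd (ha.trans hb.symm) hab.ne
      · simp only [if_pos ha, if_neg hb]
        exact (Fin.castSucc_lt_last _).ne'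
      · simp only [if_neg ha, if_pos hb]
        exact (Fin.castSucc_lt_last _).ne
      · simp only [if_neg ha, if_neg hb]
        have hmem : s(a, b) ≠ s(x, y) := by
          intro h
          rcases Sym2.eq_iff.mp h with ⟨rfl, rfl⟩ | ⟨rfl, rfl⟩
          · exact ha rfl
          · exact hb rfl
        have hadj : G₀.Adj a b := (SimpleGraph.deleteEdges_adj).mpr ⟨hab, by simpa using hmem⟩
        intro hcc
        exact c₀'.valid hadj (by simpa [Fin.castSucc_inj] using hcc)
    have hPchi : P.chromaticNumber = 4 := by
      have := chromaticNumber_eq_succ' (m := 3) hP4 hP3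
      exact_mod_cast this
    have himp : ∀ c : P.Coloring (Fin 4), c none ≠ c (some y) := by
      intro c
      have h1 : c (some x) = c (some y) :=
        hkey (SimpleGraph.Coloring.mk (fun a => c (some a))
          (fun {a b} hab => c.valid (pendant_adj_some_some.mpr hab)))
      have h2 : c none ≠ c (some x) := c.valid (pendant_adj_none.mpr rfl)
      rw [h1] at h2
      exact h2
    have hnadj : ¬ P.Adj none (some y) := by
      rw [show P = pendant G₀ x from hPdef]
      simp only [pendant_adj_none, Option.some_inj]
      exact fun h => hxny h.symm
    -- the identified graph is isomorphic to `G'`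
    have hiso : (P.identify none (some y)) ≃g G' := by
      refine ⟨⟨fun z => z.1.get (Option.isSome_iff_ne_none.mpr z.2),
        fun a => ⟨some a, by simp⟩, ?_, ?_⟩, ?_⟩
      · rintro ⟨(_ | a), hz⟩
        · exact absurd rfl hz
        · rfl
      · intro a
        rfl
      · rintro ⟨(_ | a), ha⟩ ⟨(_ | b), hb⟩
        · exact absurd rfl ha
        · exact absurd rfl ha
        · exact absurd rfl hb
        · show G'.Adj a b ↔ (P.identify none (some y)).Adj ⟨some a, ha⟩ ⟨some b, hb⟩
          unfold SimpleGraph.identify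
          constructor
          · intro hab
            refine ⟨by simpa [Subtype.ext_iff] using hab.ne, ?_⟩
            by_cases hmem : s(a, b) = s(x, y)
            · rcases Sym2.eq_iff.mp hmem with ⟨rfl, rfl⟩ | ⟨rfl, rfl⟩
              · exact Or.inr (Or.inr ⟨rfl, pendant_adj_none.mpr rfl⟩)
              · exact Or.inr (Or.inl ⟨rfl, pendant_adj_none.mpr rfl⟩)
            · exact Or.inl (pendant_adj_some_some.mpr
                ((SimpleGraph.deleteEdges_adj).mpr ⟨hab, by simpa using hmem⟩))
          · rintro ⟨hne, hor | ⟨h1, h2⟩ | ⟨h1, h2⟩⟩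
            · exact hG₀le (pendant_adj_some_some.mp hor)
            · rw [Option.some_inj] at h1
              rw [show P = pendant G₀ x from hPdef, pendant_adj_none, Option.some_inj] at h2
              subst h1; subst h2
              exact hxy.symm
            · rw [Option.some_inj] at h1
              rw [show P = pendant G₀ x from hPdef, pendant_adj_none, Option.some_inj] at h2
              subst h1; subst h2
              exact hxy
    have hIpl : (P.identify none (some y)).Planar :=
      ⟨fun hm => hpl.1 (hasMinor_mono hG'le (hasMinor_of_iso hiso hm)),
       fun hm => hpl.2 (hasMinor_mono hG'le (hasMinor_of_iso hiso hm))⟩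
    exact ⟨Option V, inferInstance, P, none, some y, hPpl, hPchi, by simp, hnadj, himp, hIpl⟩
  · -- Backward direction
    rintro ⟨V, _, G, u, v, hpl, h4, huv, hnadj, himp, hIpl⟩
    classical
    have hG4 : G.Colorable 4 :=
      chromaticNumber_le_iff_colorable.mp (by exact_mod_cast le_of_eq h4)
    obtain ⟨c⟩ := hG4
    have hvne : (v : V) ≠ u := fun h => huv h.symm
    have hH5 : (G.identify u v).Colorable 5 := by
      refine ⟨SimpleGraph.Coloring.mk
        (fun z => if z.1 = v then Fin.last 4 else (c z.1).castSucc) ?_⟩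
      rintro α β ⟨hne, hor⟩
      by_cases ha : α.1 = v <;> by_cases hb : β.1 = v
      · exact absurd (Subtype.ext (ha.trans hb.symm)) hne
      · simp only [if_pos ha, if_neg hb]
        exact (Fin.castSucc_lt_last _).ne'
      · simp only [if_neg ha, if_pos hb]
        exact (Fin.castSucc_lt_last _).ne
      · simp only [if_neg ha, if_neg hb]
        have hadj : G.Adj α.1 β.1 := by
          rcases hor with h | ⟨h1, -⟩ | ⟨h1, -⟩
          · exact h
          · exact absurd h1 ha
          · exact absurd h1 hb
        intro hcc
        exact c.valid hadj (by simpa [Fin.castSucc_inj] using hcc)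
    have hH4 : ¬ (G.identify u v).Colorable 4 := by
      rintro ⟨d⟩
      have hcol : ∀ {a b : V}, G.Adj a b →
          (fun w : V => if h : w = u then d ⟨v, hvne⟩ else d ⟨w, h⟩) a ≠
          (fun w : V => if h : w = u then d ⟨v, hvne⟩ else d ⟨w, h⟩) b := by
        intro a b hab
        by_cases ha : a = u <;> by_cases hb : b = u
        · subst ha; subst hb
          exact (hab.ne rfl).elim
        · subst ha
          simp only [dif_pos rfl, dif_neg hb]
          have hvb : v ≠ b := fun h => hnadj (h.symm ▸ hab)
          exact d.valid ⟨fun hh => hvb (congrArg Subtype.val hh),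
            Or.inr (Or.inl ⟨rfl, hab⟩)⟩
        · subst hb
          simp only [dif_pos rfl, dif_neg ha]
          have hav : a ≠ v := fun h => hnadj ((h ▸ hab).symm)
          exact d.valid ⟨fun hh => hav (congrArg Subtype.val hh),
            Or.inr (Or.inr ⟨rfl, hab.symm⟩)⟩
        · simp only [dif_neg ha, dif_neg hb]
          exact d.valid ⟨fun hh => hab.ne (congrArg Subtype.val hh), Or.inl hab⟩
      refine himp (SimpleGraph.Coloring.mk _ hcol) ?_
      show (if h : u = u then d ⟨v, hvne⟩ else d ⟨u, h⟩) =
        (if h : v = u then d ⟨v, hvne⟩ else d ⟨v, h⟩)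
      rw [dif_pos rfl, dif_neg hvne]
    have hHchi : (G.identify u v).chromaticNumber = 5 := by
      have := chromaticNumber_eq_succ' (m := 4) hH5 hH4
      exact_mod_cast this
    exact ⟨{z : V // z ≠ u}, inferInstance, G.identify u v, hIpl, hHchi⟩
end
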